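/- For every real z with z > 2: ∫_{−2}^{2} √(4 − t²) / (2π·(z − t)) dt = (z − √(z² − 4))/2. That is, the Cauchy transform of the standard Wigner semicircle distribution is G(z) = (z − √(z²−4))/2. -/

import Mathlib

open intervalIntegral

theorem cauchy_transform_semicircle (z : ℝ) (hz : 2 < z) :
    ∫ t in (-2 : ℝ)..2, Real.sqrt (4 - t ^ 2) / (2 * Real.pi * (z - t)) =
      (z - Real.sqrt (z ^ 2 - 4)) / 2 := by
  have hπ : (0 : ℝ) < Real.pi := Real.pi_pos
  have hw2 : (0:ℝ) < z ^ 2 - 4 := by nlinarith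
  set w : ℝ := Real.sqrt (z ^ 2 - 4) with hw
  have hw0 : 0 < w := Real.sqrt_pos.mpr hw2
  have hwsq : w ^ 2 = z ^ 2 - 4 := Real.sq_sqrt hw2.le
  set F : ℝ → ℝ := fun t =>
    (-Real.sqrt (4 - t ^ 2) + z * Real.arcsin (t / 2)
      + w * Real.arcsin ((4 - z * t) / (2 * (z - t)))) / (2 * Real.pi) with hF
  set f : ℝ → ℝ := fun t => Real.sqrt (4 - t ^ 2) / (2 * Real.pi * (z - t)) with hf
  have hzt : ∀ t ∈ Set.Icc (-2:ℝ) 2, 0 < z - t := by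
    intro t ht; nlinarith [ht.1, ht.2]
  -- continuity of F on [-2,2]
  have hcont : ContinuousOn F (Set.Icc (-2:ℝ) 2) := by
    apply ContinuousOn.div_const
    apply ContinuousOn.add
    apply ContinuousOn.add
    · exact ((continuous_const.sub (continuous_pow 2)).continuousOn.sqrt).neg
    · exact ((Real.continuous_arcsin.comp (continuous_id.div_const 2)).continuousOn).const_smul z
    · refine ContinuousOn.const_smul ?_ w
      apply Real.continuous_arcsin.comp_continuousOn
      exact ContinuousOn.div (by fun_prop) (by fun_prop)
        (fun t ht => by have := hzt t ht; positivity)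
  -- integrability of f
  have hint : IntervalIntegrable f MeasureTheory.volume (-2 : ℝ) 2 := by
    apply ContinuousOn.intervalIntegrable
    rw [Set.uIcc_of_le (by norm_num)]
    exact ContinuousOn.div (by fun_prop) (by fun_prop)
      (fun t ht => by have := hzt t ht; positivity)
  -- derivative on the interior
  have hderiv : ∀ x ∈ Set.Ioo (-2:ℝ) 2, HasDerivAt F (f x) x := by
    intro x hx
    have h4 : 0 < 4 - x ^ 2 := by nlinarith [hx.1, hx.2]
    set s : ℝ := Real.sqrt (4 - x ^ 2) with hs
    have hs0 : 0 < s := Real.sqrt_pos.mpr h4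
    have hssq : s ^ 2 = 4 - x ^ 2 := Real.sq_sqrt h4.le
    have hzx : 0 < z - x := hzt x (Set.mem_Icc_of_Ioo hx)
    -- first term
    have d1 : HasDerivAt (fun t : ℝ => -Real.sqrt (4 - t ^ 2)) (x / s) x := by
      have h0 : HasDerivAt (fun t : ℝ => 4 - t ^ 2) (-(2 * x)) x := by
        simpa using ((hasDerivAt_pow 2 x).const_sub 4)
      have := (Real.hasDerivAt_sqrt h4.ne').comp x h0
      refine this.neg.congr_deriv ?_
      field_simp
      ring
    -- second term
    have d2 : HasDerivAt (fun t : ℝ => z * Real.arcsin (t / 2)) (z / s) x := by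
      have hx1 : x / 2 ≠ -1 := by intro h; nlinarith [hx.1, (div_eq_iff (two_ne_zero (α := ℝ))).mp h]
      have hx2 : x / 2 ≠ 1 := by intro h; nlinarith [hx.2, (div_eq_iff (two_ne_zero (α := ℝ))).mp h]
      have h0 : HasDerivAt (fun t : ℝ => t / 2) (1 / 2) x := by
        simpa using (hasDerivAt_id x).div_const 2
      have := ((Real.hasDerivAt_arcsin hx1 hx2).comp x h0).const_mul z
      refine this.congr_deriv ?_
      have hsr : Real.sqrt (1 - (x / 2) ^ 2) = s / 2 := by
        rw [show (1 : ℝ) - (x / 2) ^ 2 = (4 - x ^ 2) / 2 ^ 2 by ring,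
          Real.sqrt_div h4.le, Real.sqrt_sq (by norm_num : (0:ℝ) ≤ 2)]
      rw [hsr]
      field_simp
    -- third term
    have d3 : HasDerivAt (fun t : ℝ => w * Real.arcsin ((4 - z * t) / (2 * (z - t))))
        (-(z ^ 2 - 4) / ((z - x) * s)) x := by
      set u : ℝ := (4 - z * x) / (2 * (z - x)) with hu
      set A : ℝ := w * s / (2 * (z - x)) with hA
      have hA0 : 0 < A := by positivity
      have hAu : 1 - u ^ 2 = A ^ 2 := by
        have hws : (w * s) ^ 2 = (z ^ 2 - 4) * (4 - x ^ 2) := by rw [mul_pow, hwsq, hssq]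
        rw [hu, hA, div_pow, div_pow, eq_div_iff (by positivity), sub_mul,
          div_mul_cancel₀ _ (by positivity : ((2:ℝ) * (z - x)) ^ 2 ≠ 0)]
        linear_combination -hws
      have hu1 : u ≠ -1 := by intro h; rw [h] at hAu; simp at hAu; nlinarith
      have hu2 : u ≠ 1 := by intro h; rw [h] at hAu; simp at hAu; nlinarith
      have h0 : HasDerivAt (fun t : ℝ => (4 - z * t) / (2 * (z - t)))
          (((-z) * (2 * (z - x)) - (4 - z * x) * (-2)) / (2 * (z - x)) ^ 2) x := by
        exact HasDerivAt.div (by simpa using (hasDerivAt_id x).const_mul z |>.const_sub 4)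
          (by simpa using ((hasDerivAt_id x).const_sub z).const_mul 2) (by positivity)
      have := ((Real.hasDerivAt_arcsin hu1 hu2).comp x h0).const_mul w
      refine this.congr_deriv ?_
      rw [show (1:ℝ) - u ^ 2 = A ^ 2 from hAu, Real.sqrt_sq hA0.le, hA]
      field_simp
      ring
    have := ((d1.add d2).add d3).div_const (2 * Real.pi)
    refine this.congr_deriv ?_
    have hsum : x / s + z / s + -(z ^ 2 - 4) / ((z - x) * s) = s / (z - x) := by
      rw [← add_div, div_add_div _ _ (by positivity) (by positivity),
        div_eq_div_iff (by positivity) (by positivity)]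
      ring_nf
      linear_combination (-(z - x) * s) * hssq
    rw [hf]
    simp only
    rw [hsum, div_div, mul_comm (z - x), ← hs]
  have key := intervalIntegral.integral_eq_sub_of_hasDerivAt_of_le (by norm_num : (-2:ℝ) ≤ 2)
    hcont hderiv hint
  rw [show (∫ t in (-2:ℝ)..2, Real.sqrt (4 - t ^ 2) / (2 * Real.pi * (z - t))) = ∫ t in (-2:ℝ)..2, f t from rfl, key]
  have e1 : ((4:ℝ) - z * 2) / (2 * (z - 2)) = -1 := by
    rw [div_eq_iff (by nlinarith)]; ring
  have e2 : ((4:ℝ) - z * (-2)) / (2 * (z - (-2))) = 1 := by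
    rw [div_eq_iff (by nlinarith)]; ring
  rw [hF]
  simp only [e1, e2, Real.arcsin_one, Real.arcsin_neg_one]
  norm_num [Real.arcsin_one]
  field_simp
  ring
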